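/- Assume BZ = 0, ZC = 0, C·A^π·A = 0, and C·A^π·B = 0. Let W = A·A^d + A^d·B·C·A^d and let Q = [[A^2·A^d, A·A^d·B], [C·A·A^d, C·A^d·B]], whose Drazin inverse is Q^d = [I; C·A^d]·((A·W)^d)^2·A·[I, A^d·B]. Then for n' such that ind(A) = n'−1 (i.e., A^π·A^{n'−1} = 0 with n'−1 minimal), the Drazin inverse of M is M^d = [[0, 0], [0, Z^d]] + Q^d + (Q^d)^2·[[0, 0], [C·A^π, 0]] + Σ_{j=1}^{n'−1} [[0, A^{j−1}·A^π·B], [0, 0]]·( (Q^d)^{j+1} + (Q^d)^{j+2}·[[0, 0], [C·A^π, 0]] ). -/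

import Mathlib

open Matrix Finset

/-- `X` is the Drazin inverse of `A`: `A X = X A`, `X A X = X`, and
`A^(k+1) X = A^k` for some (hence all sufficiently large) `k`. -/
def IsDrazinInverse {ι : Type*} [Fintype ι] [DecidableEq ι]
    (A X : Matrix ι ι ℂ) : Prop :=
  A * X = X * A ∧ X * A * X = X ∧ ∃ k : ℕ, A ^ (k + 1) * X = A ^ k

section RingAux
variable {R : Type*} [Ring R]

lemma drz_pow_ge {a x : R} (hc : a * x = x * a) {k : ℕ} (hk : a ^ (k+1) * x = a ^ k) :
    ∀ d : ℕ, a ^ (k+d+1) * x = a ^ (k+d) := by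
  intro d
  induction d with
  | zero => simpa using hk
  | succ d ih =>
    have h2 : a ^ (k + (d+1) + 1) * x = a * (a ^ (k+d+1) * x) := by
      rw [show k + (d+1) + 1 = (k+d+1)+1 from rfl, pow_succ', mul_assoc]
    rw [h2, ih, ← pow_succ']
    rfl

lemma drz_pow_ge' {a x : R} (hc : a * x = x * a) {k : ℕ} (hk : a ^ (k+1) * x = a ^ k)
    {r : ℕ} (hr : k ≤ r) : a ^ (r+1) * x = a ^ r := by
  obtain ⟨d, rfl⟩ := Nat.exists_eq_add_of_le hr
  exact drz_pow_ge hc hk d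

lemma drz_unique {a x y : R}
    (hx1 : a*x = x*a) (hx2 : x*a*x = x) (hx3 : ∃ k, a^(k+1)*x = a^k)
    (hy1 : a*y = y*a) (hy2 : y*a*y = y) (hy3 : ∃ k, a^(k+1)*y = a^k) : x = y := by
  obtain ⟨k, hk⟩ := hx3
  obtain ⟨k', hk'⟩ := hy3
  have hx2' : x*x*a = x := by rw [mul_assoc, ← hx1, ← mul_assoc]; exact hx2
  have hy2' : a*y*y = y := by rw [hy1]; exact hy2
  have powx : ∀ j : ℕ, x^(j+1) * a^j = x := by
    intro j
    induction j with
    | zero => simp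
    | succ j ih =>
      calc x^(j+2) * a^(j+1) = (x^j * (x*x)) * (a * a^j) := by
            rw [pow_succ, pow_succ, mul_assoc (x^j), ← pow_succ']
        _ = x^j * ((x*x*a) * a^j) := by rw [mul_assoc, ← mul_assoc (x*x)]
        _ = x^(j+1) * a^j := by rw [hx2', ← mul_assoc, ← pow_succ]
        _ = x := ih
  have powy : ∀ j : ℕ, a^j * y^(j+1) = y := by
    intro j
    induction j with
    | zero => simp
    | succ j ih =>
      calc a^(j+1) * y^(j+2) = (a^j * a) * (y * (y * y^j)) := by
            rw [pow_succ]
            congr 1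
            rw [pow_succ', pow_succ']
        _ = a^j * (((a*y)*y) * y^j) := by
            rw [mul_assoc, ← mul_assoc a y, ← mul_assoc (a*y)]
        _ = a^j * (y * y^j) := by rw [hy2']
        _ = a^j * y^(j+1) := by rw [← pow_succ']
        _ = y := ih
  set r := k + k' with hr
  have Hy2 : a^(r+2)*y = a^(r+1) := by
    have := drz_pow_ge' hy1 hk' (r := r+1) (by omega)
    exact this
  have Hx2 : a^(r+2)*x = a^(r+1) := by
    exact drz_pow_ge' hx1 hk (r := r+1) (by omega)
  -- e = x*a, f = a*y
  have he : x*a = x^(r+1)*a^(r+1) := by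
    calc x*a = (x^(r+1)*a^r)*a := by rw [powx r]
      _ = x^(r+1)*a^(r+1) := by rw [mul_assoc, ← pow_succ]
  have hf : a*y = a^(r+1)*y^(r+1) := by
    calc a*y = a*(a^r*y^(r+1)) := by rw [powy r]
      _ = a^(r+1)*y^(r+1) := by rw [← mul_assoc, ← pow_succ']
  have hef_e : (x*a) * (a*y) = x*a := by
    calc (x*a)*(a*y) = x^(r+1)*a^(r+1)*(a*y) := by rw [he]
      _ = x^(r+1)*(a^(r+2)*y) := by rw [mul_assoc, ← mul_assoc (a^(r+1)), ← pow_succ]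
      _ = x^(r+1)*a^(r+1) := by rw [Hy2]
      _ = x*a := he.symm
  have hef_f : (x*a) * (a*y) = a*y := by
    calc (x*a)*(a*y) = (x*a)*(a^(r+1)*y^(r+1)) := by rw [hf]
      _ = (x*a^(r+2))*y^(r+1) := by rw [← mul_assoc, mul_assoc x, ← pow_succ']
      _ = (a^(r+2)*x)*y^(r+1) := by rw [← (Commute.pow_left (hx1 : Commute a x) (r+2)).eq]
      _ = a^(r+1)*y^(r+1) := by rw [Hx2]
      _ = a*y := hf.symm
  have hef : x*a = a*y := by rw [← hef_e, hef_f]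
  calc x = x*a*x := hx2.symm
    _ = x*(x*a) := by rw [mul_assoc, ← hx1]
    _ = x*(a*y) := by rw [hef]
    _ = (x*a)*y := by rw [mul_assoc]
    _ = (a*y)*y := by rw [hef]
    _ = y := by rw [mul_assoc]; rw [← mul_assoc]; exact hy2'

lemma binom_left {x y : R} (h : x*y = 0) (r : ℕ) :
    (x+y)^r = ∑ i ∈ range (r+1), y^i * x^(r-i) := by
  have hxy : ∀ a : ℕ, x^(a+1)*y = 0 := fun a => by
    rw [pow_succ, mul_assoc, h, mul_zero]
  induction r with
  | zero => simp
  | succ r ih =>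
    rw [pow_succ, ih, sum_mul]
    have e1 : ∀ i ∈ range (r+1), y^i * x^(r-i) * (x+y)
        = y^i * x^(r+1-i) + y^i * (x^(r-i)*y) := by
      intro i hi
      have hir := mem_range.mp hi
      rw [mul_add, mul_assoc, mul_assoc, ← pow_succ,
        show r-i+1 = r+1-i from by omega]
    rw [sum_congr rfl e1, sum_add_distrib]
    have e2 : ∑ i ∈ range (r+1), y^i * (x^(r-i)*y) = y^(r+1) := by
      rw [sum_range_succ]
      have : ∀ i ∈ range r, y^i * (x^(r-i)*y) = 0 := by
        intro i hi
        have hri : r - i = (r-i-1)+1 := by have := mem_range.mp hi; omega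
        rw [hri, hxy, mul_zero]
      rw [sum_eq_zero this, zero_add, Nat.sub_self, pow_zero, one_mul, ← pow_succ]
    rw [e2, sum_range_succ (fun i => y^i * x^(r+1-i)) (r+1)]
    congr 1
    rw [Nat.sub_self, pow_zero, mul_one]

lemma binom_right {x y : R} (h : y*x = 0) (r : ℕ) :
    (x+y)^r = ∑ i ∈ range (r+1), x^(r-i) * y^i := by
  have hxy : ∀ a : ℕ, y * x^(a+1) = 0 := fun a => by
    rw [pow_succ', ← mul_assoc, h, zero_mul]
  induction r with
  | zero => simp
  | succ r ih =>
    rw [pow_succ', ih, mul_sum]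
    have e1 : ∀ i ∈ range (r+1), (x+y) * (x^(r-i) * y^i)
        = x^(r+1-i) * y^i + (y * x^(r-i)) * y^i := by
      intro i hi
      have hir := mem_range.mp hi
      rw [add_mul, ← mul_assoc, ← mul_assoc, ← pow_succ',
        show r-i+1 = r+1-i from by omega]
    rw [sum_congr rfl e1, sum_add_distrib]
    have e2 : ∑ i ∈ range (r+1), (y * x^(r-i)) * y^i = y^(r+1) := by
      rw [sum_range_succ]
      have : ∀ i ∈ range r, (y * x^(r-i)) * y^i = 0 := by
        intro i hi
        have hri : r - i = (r-i-1)+1 := by have := mem_range.mp hi; omega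
        rw [hri, hxy, zero_mul]
      rw [sum_eq_zero this, zero_add, Nat.sub_self, pow_zero, mul_one, ← pow_succ']
    rw [e2, sum_range_succ (fun i => x^(r+1-i) * y^i) (r+1)]
    congr 1
    rw [Nat.sub_self, pow_zero, one_mul]

lemma drz_add_orth {x y xd yd : R}
    (hx1 : x*xd = xd*x) (hx2 : xd*x*xd = xd) (kx : ℕ) (hx3 : x^(kx+1)*xd = x^kx)
    (hy1 : y*yd = yd*y) (hy2 : yd*y*yd = yd) (ky : ℕ) (hy3 : y^(ky+1)*yd = y^ky)
    (hxy : x*y = 0) (hyx : y*x = 0) :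
    (x+y)*(xd+yd) = (xd+yd)*(x+y) ∧ (xd+yd)*(x+y)*(xd+yd) = xd+yd ∧
      ∃ N, (x+y)^(N+1)*(xd+yd) = (x+y)^N := by
  have hxd : xd*xd*x = xd := by rw [mul_assoc, ← hx1, ← mul_assoc]; exact hx2
  have hxd' : x*xd*xd = xd := by rw [hx1]; exact hx2
  have hyd : yd*yd*y = yd := by rw [mul_assoc, ← hy1, ← mul_assoc]; exact hy2
  have hyd' : y*yd*yd = yd := by rw [hy1]; exact hy2
  have hxdy : xd*y = 0 := by rw [← hxd, mul_assoc, mul_assoc, hxy, mul_zero, mul_zero]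
  have hydx : yd*x = 0 := by rw [← hyd, mul_assoc, mul_assoc, hyx, mul_zero, mul_zero]
  have hyxd : y*xd = 0 := by rw [← hxd', ← mul_assoc, ← mul_assoc, hyx, zero_mul, zero_mul]
  have hxyd : x*yd = 0 := by rw [← hyd', ← mul_assoc, ← mul_assoc, hxy, zero_mul, zero_mul]
  have hxdyd : xd*yd = 0 := by rw [← hxd, mul_assoc, mul_assoc, hxyd, mul_zero, mul_zero]
  have hydxd : yd*xd = 0 := by rw [← hyd, mul_assoc, mul_assoc, hyxd, mul_zero, mul_zero]
  have qxdy : ∀ z : R, xd*(y*z) = 0 := fun z => by rw [← mul_assoc, hxdy, zero_mul]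
  have qydx : ∀ z : R, yd*(x*z) = 0 := fun z => by rw [← mul_assoc, hydx, zero_mul]
  have hx2r : xd*(x*xd) = xd := by rw [← mul_assoc]; exact hx2
  have hy2r : yd*(y*yd) = yd := by rw [← mul_assoc]; exact hy2
  have binom : ∀ r : ℕ, (x+y)^(r+1) = x^(r+1) + y^(r+1) := by
    intro r
    induction r with
    | zero => simp
    | succ r ih =>
      have hxy1 : x^(r+1)*y = 0 := by rw [pow_succ, mul_assoc, hxy, mul_zero]
      have hyx1 : y^(r+1)*x = 0 := by rw [pow_succ, mul_assoc, hyx, mul_zero]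
      rw [pow_succ, ih, add_mul, mul_add, mul_add, hxy1, hyx1, add_zero, zero_add,
        ← pow_succ, ← pow_succ]
  refine ⟨?_, ?_, ?_⟩
  · simp only [add_mul, mul_add, hxyd, hyxd, hxdy, hydx, add_zero, zero_add]
    rw [hx1, hy1]
  · simp only [add_mul, mul_add, mul_assoc, hxyd, hyxd, qxdy, qydx, hxdyd, hydxd,
      mul_zero, zero_mul, add_zero, zero_add, hx2r, hy2r]
  · refine ⟨kx+ky+1, ?_⟩
    have qx : x^(kx+ky+1+1)*yd = 0 := by rw [pow_succ, mul_assoc, hxyd, mul_zero]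
    have qy : y^(kx+ky+1+1)*xd = 0 := by rw [pow_succ, mul_assoc, hyxd, mul_zero]
    rw [binom, binom, add_mul, mul_add, mul_add, qx, qy, add_zero, zero_add]
    rw [drz_pow_ge' hx1 hx3 (by omega), drz_pow_ge' hy1 hy3 (by omega)]

lemma drz_add_left {x y xd : R}
    (hc : x*xd = xd*x) (hi : xd*x*xd = xd) (k : ℕ) (hk : x^(k+1)*xd = x^k)
    (hxy : x*y = 0) (p : ℕ) (hyp : y^(p+1) = 0) :
    (x+y) * (∑ j ∈ range (p+1), y^j * xd^(j+1))
        = (∑ j ∈ range (p+1), y^j * xd^(j+1)) * (x+y) ∧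
    (∑ j ∈ range (p+1), y^j * xd^(j+1)) * (x+y) * (∑ j ∈ range (p+1), y^j * xd^(j+1))
        = (∑ j ∈ range (p+1), y^j * xd^(j+1)) ∧
    ∃ N, (x+y)^(N+1) * (∑ j ∈ range (p+1), y^j * xd^(j+1))
        = (x+y)^N := by
  set w := ∑ j ∈ range (p+1), y^j * xd^(j+1) with hw
  have hxd2 : xd*xd*x = xd := by rw [mul_assoc, ← hc, ← mul_assoc]; exact hi
  have hxd2' : x*xd*xd = xd := by rw [hc]; exact hi
  have d1 : xd*y = 0 := by rw [← hxd2, mul_assoc, mul_assoc, hxy, mul_zero, mul_zero]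
  have d1' : ∀ i : ℕ, xd*y^(i+1) = 0 := fun i => by
    rw [pow_succ', ← mul_assoc, d1, zero_mul]
  have d2 : ∀ j : ℕ, xd^(j+1)*y = 0 := fun j => by
    rw [pow_succ, mul_assoc, d1, mul_zero]
  have d2' : ∀ j i : ℕ, xd^(j+1)*y^(i+1) = 0 := fun j i => by
    rw [pow_succ' y, ← mul_assoc, d2, zero_mul]
  have d3'' : ∀ i : ℕ, x*y^(i+1) = 0 := fun i => by
    rw [pow_succ', ← mul_assoc, hxy, zero_mul]
  have d3a : ∀ a : ℕ, x^(a+1)*y = 0 := fun a => by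
    rw [pow_succ, mul_assoc, hxy, mul_zero]
  have d3' : ∀ a i : ℕ, x^(a+1)*y^(i+1) = 0 := fun a i => by
    rw [pow_succ' y, ← mul_assoc, d3a, zero_mul]
  have d4 : ∀ j : ℕ, xd^(j+1+1)*x = xd^(j+1) := fun j => by
    rw [show j+1+1 = j+2 from rfl, pow_add, pow_two, mul_assoc, hxd2, ← pow_succ]
  have W1 : x*w = x*xd := by
    rw [hw, mul_sum, sum_range_succ']
    have t : ∀ i ∈ range p, x*(y^(i+1)*xd^(i+1+1)) = 0 := fun i _ => by
      rw [← mul_assoc, d3'', zero_mul]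
    rw [sum_eq_zero t, zero_add, pow_zero, one_mul, pow_one]
  have W2 : y*w = ∑ j ∈ range p, y^(j+1)*xd^(j+1) := by
    rw [hw, mul_sum]
    have t : ∀ j ∈ range (p+1), y*(y^j*xd^(j+1)) = y^(j+1)*xd^(j+1) := fun j _ => by
      rw [← mul_assoc, ← pow_succ']
    rw [sum_congr rfl t, sum_range_succ, hyp, zero_mul, add_zero]
  have W3 : w*x = x*xd + ∑ j ∈ range p, y^(j+1)*xd^(j+1) := by
    rw [hw, sum_mul, sum_range_succ']
    have t : ∀ i ∈ range p, (y^(i+1)*xd^(i+1+1))*x = y^(i+1)*xd^(i+1) := fun i _ => by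
      rw [mul_assoc, d4]
    rw [sum_congr rfl t, pow_zero, one_mul, pow_one, ← hc, add_comm]
  have W4 : w*y = 0 := by
    rw [hw, sum_mul]
    refine sum_eq_zero fun j _ => ?_
    rw [mul_assoc, d2, mul_zero]
  have cond1 : (x+y)*w = w*(x+y) := by
    rw [add_mul, mul_add, W1, W2, W3, W4, add_zero]
  refine ⟨cond1, ?_, ?_⟩
  · have hw2 : w*(x+y) = x*xd + ∑ j ∈ range p, y^(j+1)*xd^(j+1) := by
      rw [mul_add, W3, W4, add_zero]
    have E1 : (x*xd)*w = xd := by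
      rw [hw, mul_sum, sum_range_succ']
      have t : ∀ i ∈ range p, (x*xd)*(y^(i+1)*xd^(i+1+1)) = 0 := fun i _ => by
        rw [← mul_assoc, mul_assoc x xd, d1', mul_zero, zero_mul]
      rw [sum_eq_zero t, zero_add, pow_zero, one_mul, pow_one, hxd2']
    have E2 : ∀ a : ℕ, xd^(a+1)*w = xd^(a+1+1) := by
      intro a
      rw [hw, mul_sum, sum_range_succ']
      have t : ∀ i ∈ range p, xd^(a+1)*(y^(i+1)*xd^(i+1+1)) = 0 := fun i _ => by
        rw [← mul_assoc, d2', zero_mul]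
      rw [sum_eq_zero t, zero_add, pow_zero, one_mul, pow_one, ← pow_succ]
    have E3 : (∑ j ∈ range p, y^(j+1)*xd^(j+1))*w
        = ∑ j ∈ range p, y^(j+1)*xd^(j+1+1) := by
      rw [sum_mul]
      refine sum_congr rfl fun j _ => ?_
      rw [mul_assoc, E2]
    rw [hw2, add_mul, E1, E3]
    rw [hw, sum_range_succ', pow_zero, one_mul, pow_one, add_comm]
  · refine ⟨p+k, ?_⟩
    have ynil : ∀ a : ℕ, y^(p+1+a) = 0 := fun a => by rw [pow_add, hyp, zero_mul]
    have XW : ∀ a : ℕ, x^(a+1)*w = x^(a+1)*xd := by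
      intro a
      rw [hw, mul_sum, sum_range_succ']
      have t : ∀ i ∈ range p, x^(a+1)*(y^(i+1)*xd^(i+1+1)) = 0 := fun i _ => by
        rw [← mul_assoc, d3', zero_mul]
      rw [sum_eq_zero t, zero_add, pow_zero, one_mul, pow_one]
    rw [binom_left hxy (p+k+1), sum_mul]
    have hlast : y^(p+k+1) * x^(p+k+1-(p+k+1)) * w = 0 := by
      rw [show p+k+1 = p+1+k from by omega, ynil, zero_mul, zero_mul]
    rw [sum_range_succ, hlast, add_zero]
    have t : ∀ i ∈ range (p+k+1), y^i * x^(p+k+1-i) * w = y^i * x^(p+k-i) := by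
      intro i hi
      have hir := mem_range.mp hi
      by_cases hip : i ≤ p
      · have h1 : p+k+1-i = (p+k-i)+1 := by omega
        rw [mul_assoc, h1, XW (p+k-i),
          drz_pow_ge' hc hk (show k ≤ p+k-i from by omega)]
      · have hyi : y^i = 0 := by
          rw [show i = p+1+(i-(p+1)) from by omega]; exact ynil _
        rw [hyi, zero_mul, zero_mul, zero_mul]
    rw [sum_congr rfl t, ← binom_left hxy (p+k)]

lemma drz_add_right {x y xd : R}
    (hc : x*xd = xd*x) (hi : xd*x*xd = xd) (k : ℕ) (hk : x^(k+1)*xd = x^k)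
    (hyx : y*x = 0) (p : ℕ) (hyp : y^(p+1) = 0) :
    (x+y) * (∑ j ∈ range (p+1), xd^(j+1) * y^j)
        = (∑ j ∈ range (p+1), xd^(j+1) * y^j) * (x+y) ∧
    (∑ j ∈ range (p+1), xd^(j+1) * y^j) * (x+y) * (∑ j ∈ range (p+1), xd^(j+1) * y^j)
        = (∑ j ∈ range (p+1), xd^(j+1) * y^j) ∧
    ∃ N, (x+y)^(N+1) * (∑ j ∈ range (p+1), xd^(j+1) * y^j)
        = (x+y)^N := by
  set w := ∑ j ∈ range (p+1), xd^(j+1) * y^j with hw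
  have hxd2 : xd*xd*x = xd := by rw [mul_assoc, ← hc, ← mul_assoc]; exact hi
  have hxd2' : x*xd*xd = xd := by rw [hc]; exact hi
  have n1 : y*xd = 0 := by
    rw [← hxd2', ← mul_assoc, ← mul_assoc, hyx, zero_mul, zero_mul]
  have n2 : ∀ i : ℕ, y^(i+1)*xd = 0 := fun i => by
    rw [pow_succ, mul_assoc, n1, mul_zero]
  have n3 : ∀ i j : ℕ, y^(i+1)*xd^(j+1) = 0 := fun i j => by
    rw [pow_succ' xd, ← mul_assoc, n2, zero_mul]
  have n4 : ∀ j : ℕ, y*xd^(j+1) = 0 := fun j => by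
    rw [pow_succ' xd, ← mul_assoc, n1, zero_mul]
  have n5 : ∀ j : ℕ, y^(j+1)*x = 0 := fun j => by
    rw [pow_succ, mul_assoc, hyx, mul_zero]
  have xxd : ∀ j : ℕ, x*xd^(j+1+1) = xd^(j+1) := fun j => by
    rw [show j+1+1 = 2+j from by omega, pow_add, pow_two, ← mul_assoc, ← mul_assoc,
      hxd2', ← pow_succ']
  have W1 : x*w = x*xd + ∑ j ∈ range p, xd^(j+1)*y^(j+1) := by
    rw [hw, mul_sum, sum_range_succ']
    have t : ∀ i ∈ range p, x*(xd^(i+1+1)*y^(i+1)) = xd^(i+1)*y^(i+1) := fun i _ => by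
      rw [← mul_assoc, xxd]
    rw [sum_congr rfl t, pow_zero, mul_one, pow_one, add_comm]
  have W2 : y*w = 0 := by
    rw [hw, mul_sum]
    refine sum_eq_zero fun j _ => ?_
    rw [← mul_assoc, n4, zero_mul]
  have W3 : w*x = x*xd := by
    rw [hw, sum_mul, sum_range_succ']
    have t : ∀ i ∈ range p, (xd^(i+1+1)*y^(i+1))*x = 0 := fun i _ => by
      rw [mul_assoc, n5, mul_zero]
    rw [sum_eq_zero t, zero_add, pow_zero, mul_one, pow_one, ← hc]
  have W4 : w*y = ∑ j ∈ range p, xd^(j+1)*y^(j+1) := by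
    rw [hw, sum_mul]
    have t : ∀ j ∈ range (p+1), (xd^(j+1)*y^j)*y = xd^(j+1)*y^(j+1) := fun j _ => by
      rw [mul_assoc, ← pow_succ]
    rw [sum_congr rfl t, sum_range_succ, hyp, mul_zero, add_zero]
  refine ⟨?_, ?_, ?_⟩
  · rw [add_mul, mul_add, W1, W2, W3, W4, add_zero]
  · have hw2 : w*(x+y) = x*xd + ∑ j ∈ range p, xd^(j+1)*y^(j+1) := by
      rw [mul_add, W3, W4]
    have E1 : (x*xd)*w = w := by
      rw [hw, mul_sum]
      refine sum_congr rfl fun j _ => ?_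
      rw [← mul_assoc, mul_assoc x xd, ← pow_succ' xd, xxd]
    have E3 : (∑ j ∈ range p, xd^(j+1)*y^(j+1))*w = 0 := by
      rw [sum_mul]
      refine sum_eq_zero fun j _ => ?_
      have : y^(j+1)*w = 0 := by
        rw [hw, mul_sum]
        refine sum_eq_zero fun i _ => ?_
        rw [← mul_assoc, n3, zero_mul]
      rw [mul_assoc, this, mul_zero]
    rw [hw2, add_mul, E1, E3, add_zero]
  · refine ⟨p+k, ?_⟩
    have ynil : ∀ a : ℕ, y^(p+1+a) = 0 := fun a => by rw [pow_add, hyp, zero_mul]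
    have YW : ∀ i : ℕ, y^(i+1)*w = 0 := by
      intro i
      rw [hw, mul_sum]
      refine sum_eq_zero fun j _ => ?_
      rw [← mul_assoc, n3, zero_mul]
    have G : ∀ j : ℕ, j ≤ p → x^(p+k+1)*xd^(j+1) = x^(p+k-j) := by
      intro j
      induction j with
      | zero =>
        intro _
        rw [pow_one, drz_pow_ge' hc hk (show k ≤ p+k from by omega)]
        norm_num
      | succ j ih =>
        intro hj
        have ihj := ih (by omega)
        rw [pow_succ xd (j+1), ← mul_assoc, ihj,
          show p+k-j = (p+k-(j+1))+1 from by omega,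
          drz_pow_ge' hc hk (show k ≤ p+k-(j+1) from by omega)]
    rw [binom_right hyx (p+k+1), sum_mul, sum_range_succ']
    have t : ∀ i ∈ range (p+k+1), x^(p+k+1-(i+1))*y^(i+1)*w = 0 := fun i _ => by
      rw [mul_assoc, YW, mul_zero]
    rw [sum_eq_zero t, zero_add, pow_zero, mul_one, Nat.sub_zero]
    have hXW : x^(p+k+1)*w = ∑ j ∈ range (p+1), x^(p+k-j)*y^j := by
      rw [hw, mul_sum]
      refine sum_congr rfl fun j hj => ?_
      have hjp := mem_range.mp hj
      rw [← mul_assoc, G j (by omega)]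
    rw [hXW, binom_right hyx (p+k)]
    refine sum_subset (range_subset_range.mpr (by omega)) ?_
    intro i hi hni
    have hge : p + 1 ≤ i := by
      by_contra hlt
      exact hni (mem_range.mpr (by omega))
    have : y^i = 0 := by
      rw [show i = p+1+(i-(p+1)) from by omega]
      exact ynil _
    rw [this, mul_zero]
section MatAux

lemma drz_flip {ι κ : Type*} [Fintype ι] [DecidableEq ι] [Fintype κ] [DecidableEq κ]
    (t : Matrix ι κ ℂ) (r : Matrix κ ι ℂ) (w : Matrix ι ι ℂ)
    (h1 : (t*r)*w = w*(t*r)) (h2 : w*(t*r)*w = w) (k : ℕ)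
    (h3 : (t*r)^(k+1)*w = (t*r)^k) :
    (r*t)*(r*(w*w)*t) = (r*(w*w)*t)*(r*t) ∧
    (r*(w*w)*t)*(r*t)*(r*(w*w)*t) = r*(w*w)*t ∧
    ∃ N, (r*t)^(N+1)*(r*(w*w)*t) = (r*t)^N := by
  have w2a : (w*w)*(t*r) = w := by
    rw [mul_assoc, ← h1, ← mul_assoc]; exact h2
  have aw2 : (t*r)*(w*w) = w := by
    rw [← mul_assoc, h1]; exact h2
  have hphi : ∀ u v : Matrix ι ι ℂ, (r*u*t)*(r*v*t) = r*(u*((t*r)*v))*t := by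
    intro u v
    rw [Matrix.mul_assoc (r*u) t, ← Matrix.mul_assoc t (r*v) t,
      ← Matrix.mul_assoc t r v, ← Matrix.mul_assoc (r*u), Matrix.mul_assoc r u]
  have hq1 : r*t = r*(1 : Matrix ι ι ℂ)*t := by rw [Matrix.mul_one]
  have qpow : ∀ j : ℕ, (r*t)^(j+1) = r*(t*r)^j*t := by
    intro j
    induction j with
    | zero => rw [pow_one, pow_zero]; exact hq1
    | succ j ih =>
      rw [pow_succ, ih, hq1, hphi, Matrix.mul_one, ← pow_succ]
  refine ⟨?_, ?_, ?_⟩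
  · rw [hq1, hphi, hphi, Matrix.one_mul, Matrix.mul_one, aw2, w2a]
  · rw [hq1, hphi, Matrix.mul_one, w2a, hphi, aw2]
  · refine ⟨k+1, ?_⟩
    rw [qpow (k+1), hphi, aw2, h3, qpow k]

lemma drz_diag {ι κ : Type*} [Fintype ι] [DecidableEq ι] [Fintype κ] [DecidableEq κ]
    (Z Zd : Matrix κ κ ℂ) (h1 : Z*Zd = Zd*Z) (h2 : Zd*Z*Zd = Zd) (k : ℕ)
    (h3 : Z^(k+1)*Zd = Z^k) :
    (Matrix.fromBlocks (0:Matrix ι ι ℂ) 0 0 Z) * (Matrix.fromBlocks 0 0 0 Zd)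
      = (Matrix.fromBlocks 0 0 0 Zd) * (Matrix.fromBlocks (0:Matrix ι ι ℂ) 0 0 Z) ∧
    (Matrix.fromBlocks 0 0 0 Zd) * (Matrix.fromBlocks (0:Matrix ι ι ℂ) 0 0 Z)
        * (Matrix.fromBlocks 0 0 0 Zd) = (Matrix.fromBlocks 0 0 0 Zd) ∧
    ∃ N, (Matrix.fromBlocks (0:Matrix ι ι ℂ) 0 0 Z)^(N+1) * (Matrix.fromBlocks 0 0 0 Zd)
      = (Matrix.fromBlocks (0:Matrix ι ι ℂ) 0 0 Z)^N := by
  have hmul : ∀ (U V : Matrix κ κ ℂ),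
      (Matrix.fromBlocks (0:Matrix ι ι ℂ) 0 0 U) * (Matrix.fromBlocks 0 0 0 V)
        = Matrix.fromBlocks 0 0 0 (U*V) := by
    intro U V
    rw [Matrix.fromBlocks_multiply]
    simp
  have hpow : ∀ r : ℕ, (Matrix.fromBlocks (0:Matrix ι ι ℂ) 0 0 Z)^(r+1)
      = Matrix.fromBlocks 0 0 0 (Z^(r+1)) := by
    intro r
    induction r with
    | zero => rw [pow_one, pow_one]
    | succ r ih => rw [pow_succ, ih, hmul, ← pow_succ]
  refine ⟨?_, ?_, ⟨k+1, ?_⟩⟩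
  · rw [hmul, hmul, h1]
  · rw [hmul, hmul, h2]
  · rw [hpow, hpow, hmul, drz_pow_ge' h1 h3 (show k ≤ k+1 from by omega)]

end MatAux
end RingAux
set_option maxHeartbeats 4000000 in
theorem stmt_13 {m n : ℕ}
    (A Ad : Matrix (Fin m) (Fin m) ℂ) (B : Matrix (Fin m) (Fin n) ℂ)
    (C : Matrix (Fin n) (Fin m) ℂ) (D : Matrix (Fin n) (Fin n) ℂ)
    (hAd : IsDrazinInverse A Ad)
    (Z : Matrix (Fin n) (Fin n) ℂ) (hZ : Z = D - C * Ad * B)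
    (Zd : Matrix (Fin n) (Fin n) ℂ) (hZd : IsDrazinInverse Z Zd)
    (hBZ : B * Z = 0) (hZC : Z * C = 0)
    (hCAA : C * (1 - A * Ad) * A = 0) (hCAB : C * (1 - A * Ad) * B = 0)
    (AWd : Matrix (Fin m) (Fin m) ℂ)
    (hAWd : IsDrazinInverse (A * (A * Ad + Ad * B * C * Ad)) AWd)
    (Q Qd : Matrix (Fin m ⊕ Fin n) (Fin m ⊕ Fin n) ℂ)
    (hQ : Q = Matrix.fromBlocks (A ^ 2 * Ad) (A * Ad * B) (C * A * Ad) (C * Ad * B))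
    (hQd : IsDrazinInverse Q Qd)
    (n' : ℕ) (hn' : 1 ≤ n')
    -- `ind A = n' - 1`: `Aπ * A ^ (n'-1) = 0` and `n' - 1` is minimal with this property
    (hindA : (1 - A * Ad) * A ^ (n' - 1) = 0)
    (hindA' : ∀ j < n' - 1, (1 - A * Ad) * A ^ j ≠ 0) :
    Qd = Matrix.fromRows (1 : Matrix (Fin m) (Fin m) ℂ) (C * Ad) *
        (AWd ^ 2 * A) * Matrix.fromCols (1 : Matrix (Fin m) (Fin m) ℂ) (Ad * B) ∧
    IsDrazinInverse (Matrix.fromBlocks A B C D)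
      (Matrix.fromBlocks 0 0 0 Zd + Qd +
        Qd ^ 2 * Matrix.fromBlocks 0 0 (C * (1 - A * Ad)) 0 +
        ∑ j ∈ Finset.Icc 1 (n' - 1),
          Matrix.fromBlocks 0 (A ^ (j - 1) * (1 - A * Ad) * B) 0 0 *
            (Qd ^ (j + 1) +
              Qd ^ (j + 2) * Matrix.fromBlocks 0 0 (C * (1 - A * Ad)) 0)) := by
  obtain ⟨hA1, hA2, kA, hA3⟩ := hAd
  obtain ⟨hZ1, hZ2, kZ, hZ3⟩ := hZd
  obtain ⟨hQ1, hQ2, kQ, hQ3⟩ := hQd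
  obtain ⟨hW1, hW2, kW, hW3⟩ := hAWd
  set π : Matrix (Fin m) (Fin m) ℂ := 1 - A*Ad with hπdef
  set ν : ℕ := n' - 1 with hνdef
  set AW : Matrix (Fin m) (Fin m) ℂ := A*(A*Ad + Ad*B*C*Ad) with hAWdef
  -- ============ basic scalar facts ============
  have hA2' : Ad*(A*Ad) = Ad := by rw [← mul_assoc]; exact hA2
  have ip : (A*Ad)*(A*Ad) = A*Ad := by rw [mul_assoc, hA2']
  have ip' : A*Ad*A*Ad = A*Ad := by
    rw [mul_assoc (A*Ad) A Ad, mul_assoc A Ad (A*Ad), hA2']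
  have hπAAd : π*(A*Ad) = 0 := by rw [hπdef, sub_mul, one_mul, ip, sub_self]
  have hAAdπ : (A*Ad)*π = 0 := by rw [hπdef, mul_sub, mul_one, ip, sub_self]
  have hAdπ : Ad*π = 0 := by rw [hπdef, mul_sub, mul_one, hA2', sub_self]
  have hππ : π*π = π := by
    nth_rewrite 1 [hπdef]
    rw [sub_mul, one_mul, hAAdπ, sub_zero]
  have hπA : π*A = A*π := by
    rw [hπdef, sub_mul, mul_sub, one_mul, mul_one]
    congr 1
    rw [mul_assoc, ← hA1]
  have cAπ : Commute A π := hπA.symm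
  have cAjπ : ∀ j : ℕ, π*A^j = A^j*π := fun j => ((cAπ.pow_left j).eq).symm
  have pfx1 : A*Ad*A = A*A*Ad := by
    calc A*Ad*A = A*(Ad*A) := mul_assoc _ _ _
      _ = A*(A*Ad) := by rw [← hA1]
      _ = A*A*Ad := (mul_assoc _ _ _).symm
  have hA2A : A^2*Ad = (A*Ad)*A := by rw [pow_two]; exact pfx1.symm
  have sfx1 : ∀ (ι' : Type) (X : Matrix ι' (Fin m) ℂ), X*Ad*A*Ad = X*Ad := by
    intro ι' X
    rw [Matrix.mul_assoc X Ad A, Matrix.mul_assoc X, hA2]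
  have cAdA : C*Ad*A = C*A*Ad := by
    rw [Matrix.mul_assoc, ← hA1, ← Matrix.mul_assoc]
  have cAdAAd : C*Ad*A*Ad = C*Ad := sfx1 _ C
  have hAAdAd : A*Ad*Ad = Ad := by rw [hA1]; exact hA2
  -- ============ AW facts ============
  have hAWAAd : AW*(A*Ad) = AW := by
    rw [hAWdef]
    simp only [mul_add, add_mul, ← Matrix.mul_assoc]
    rw [sfx1 _ (A*A), sfx1 _ (A*Ad*B*C)]
  have hAAdAW : (A*Ad)*AW = AW := by
    rw [hAWdef]
    simp only [mul_add, add_mul, ← Matrix.mul_assoc]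
    rw [pfx1, sfx1 _ (A*A), mul_assoc A A Ad, mul_assoc A (A*Ad) Ad, hAAdAd]
  have hπAW : π*AW = 0 := by
    rw [hπdef, sub_mul, one_mul, hAAdAW, sub_self]
  have w2AW : AWd*AWd*AW = AWd := by
    rw [mul_assoc, ← hW1, ← mul_assoc]; exact hW2
  have AWw2 : AW*(AWd*AWd) = AWd := by
    rw [← mul_assoc, hW1]; exact hW2
  have hπAWd : π*AWd = 0 := by
    calc π*AWd = π*(AW*(AWd*AWd)) := by rw [AWw2]
      _ = (π*AW)*(AWd*AWd) := by rw [← mul_assoc]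
      _ = 0 := by rw [hπAW, zero_mul]
  have πpowAWd : ∀ j : ℕ, (π*A^j)*AWd = 0 := fun j => by
    rw [cAjπ j, mul_assoc, hπAWd, mul_zero]
  have wAAd : AWd*(A*Ad) = AWd := by
    calc AWd*(A*Ad) = (AWd*AWd*AW)*(A*Ad) := by rw [w2AW]
      _ = (AWd*AWd)*(AW*(A*Ad)) := by rw [mul_assoc]
      _ = AWd*AWd*AW := by rw [hAWAAd]
      _ = AWd := w2AW
  -- ============ Part 1: the factorization Q = R₀ * T₀ ============
  have hRT : Matrix.fromRows (1 : Matrix (Fin m) (Fin m) ℂ) (C*Ad) *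
      Matrix.fromCols (A^2*Ad) (A*Ad*B) = Q := by
    rw [hQ, Matrix.fromRows_mul_fromCols, Matrix.one_mul, Matrix.one_mul,
      Matrix.fromBlocks_inj]
    refine ⟨rfl, rfl, ?_, ?_⟩
    · simp only [pow_two, ← Matrix.mul_assoc]
      rw [cAdA, sfx1 _ (C*A)]
    · simp only [← Matrix.mul_assoc]
      rw [cAdAAd]
  have hTR : Matrix.fromCols (A^2*Ad) (A*Ad*B) *
      Matrix.fromRows (1 : Matrix (Fin m) (Fin m) ℂ) (C*Ad) = AW := by
    rw [Matrix.fromCols_mul_fromRows, Matrix.mul_one, hAWdef]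
    simp only [mul_add, pow_two, ← Matrix.mul_assoc]
  have hflip := drz_flip (Matrix.fromCols (A^2*Ad) (A*Ad*B))
    (Matrix.fromRows (1 : Matrix (Fin m) (Fin m) ℂ) (C*Ad)) AWd
    (by rw [hTR]; exact hW1) (by rw [hTR]; exact hW2) kW (by rw [hTR]; exact hW3)
  rw [hRT] at hflip
  obtain ⟨u1, u2, Nu, u3⟩ := hflip
  have part1 : Qd = Matrix.fromRows (1 : Matrix (Fin m) (Fin m) ℂ) (C*Ad) *
      (AWd*AWd) * Matrix.fromCols (A^2*Ad) (A*Ad*B) :=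
    drz_unique hQ1 hQ2 ⟨kQ, hQ3⟩ u1 u2 ⟨Nu, u3⟩
  have cc1 : (AWd*AWd)*(A^2*Ad) = (AWd^2*A)*1 := by
    rw [Matrix.mul_one, hA2A, ← mul_assoc, mul_assoc AWd AWd (A*Ad), wAAd, pow_two]
  have cc2 : (AWd*AWd)*(A*Ad*B) = (AWd^2*A)*(Ad*B) := by
    simp only [pow_two, ← Matrix.mul_assoc]
  have hT2 : (AWd*AWd)*Matrix.fromCols (A^2*Ad) (A*Ad*B)
      = (AWd^2*A)*Matrix.fromCols (1 : Matrix (Fin m) (Fin m) ℂ) (Ad*B) := by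
    rw [Matrix.mul_fromCols, Matrix.mul_fromCols, cc1, cc2]
  have claim1 : Qd = Matrix.fromRows (1 : Matrix (Fin m) (Fin m) ℂ) (C*Ad) *
      (AWd^2*A) * Matrix.fromCols (1 : Matrix (Fin m) (Fin m) ℂ) (Ad*B) := by
    rw [part1, Matrix.mul_assoc, hT2, ← Matrix.mul_assoc]
  refine ⟨claim1, ?_⟩
  -- ============ Part 2 ============
  -- block form of Qd
  have Qdb : Qd = Matrix.fromBlocks (AWd^2*A) ((AWd^2*A)*(Ad*B))
      ((C*Ad)*(AWd^2*A)) (((C*Ad)*(AWd^2*A))*(Ad*B)) := by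
    rw [claim1, Matrix.fromRows_mul, Matrix.fromRows_mul_fromCols,
      Matrix.one_mul, Matrix.mul_one, Matrix.mul_one]
  set K : Matrix (Fin m ⊕ Fin n) (Fin m ⊕ Fin n) ℂ :=
    Matrix.fromBlocks 0 0 (C*π) 0 with hKdef
  set L : Matrix (Fin m ⊕ Fin n) (Fin m ⊕ Fin n) ℂ :=
    Matrix.fromBlocks (π*A) (π*B) 0 0 with hLdef
  set M2 : Matrix (Fin m ⊕ Fin n) (Fin m ⊕ Fin n) ℂ :=
    Matrix.fromBlocks 0 0 0 Z with hM2def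
  -- K * Q = 0, K * K = 0
  have z1 : (C*π)*(A^2*Ad) = 0 := by
    simp only [pow_two, ← Matrix.mul_assoc]
    rw [hCAA, Matrix.zero_mul, Matrix.zero_mul]
  have z2 : (C*π)*(A*Ad*B) = 0 := by
    simp only [← Matrix.mul_assoc]
    rw [hCAA, Matrix.zero_mul, Matrix.zero_mul]
  have hKQ : K*Q = 0 := by
    rw [hKdef, hQ, Matrix.fromBlocks_multiply]
    simp [z1, z2]
  have hKK : K*K = 0 := by
    rw [hKdef, Matrix.fromBlocks_multiply]
    simp
  -- Q * L = 0, K * L = 0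
  have y1 : (A^2*Ad)*π = 0 := by rw [mul_assoc, hAdπ, mul_zero]
  have y2 : (C*A*Ad)*π = 0 := by rw [Matrix.mul_assoc (C*A) Ad π, hAdπ, Matrix.mul_zero]
  have hQL : Q*L = 0 := by
    rw [hQ, hLdef, Matrix.fromBlocks_multiply]
    have e1 : (A^2*Ad)*(π*A) = 0 := by rw [← mul_assoc, y1, zero_mul]
    have e2 : (A^2*Ad)*(π*B) = 0 := by rw [← Matrix.mul_assoc, y1, Matrix.zero_mul]
    have e3 : (C*A*Ad)*(π*A) = 0 := by rw [← Matrix.mul_assoc, y2, Matrix.zero_mul]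
    have e4 : (C*A*Ad)*(π*B) = 0 := by rw [← Matrix.mul_assoc, y2, Matrix.zero_mul]
    simp [e1, e2, e3, e4]
  have hKL : K*L = 0 := by
    rw [hKdef, hLdef, Matrix.fromBlocks_multiply]
    have e1 : (C*π)*(π*A) = 0 := by
      rw [← Matrix.mul_assoc, Matrix.mul_assoc C π π, hππ, hCAA]
    have e2 : (C*π)*(π*B) = 0 := by
      rw [← Matrix.mul_assoc, Matrix.mul_assoc C π π, hππ, hCAB]
    simp [e1, e2]
  have hSL : (Q+K)*L = 0 := by rw [add_mul, hQL, hKL, add_zero]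
  -- K * Qd = 0
  have QQd2 : Q*(Qd*Qd) = Qd := by rw [← mul_assoc, hQ1]; exact hQ2
  have KQd : K*Qd = 0 := by
    rw [← QQd2, ← mul_assoc, hKQ, zero_mul]
  -- powers of L
  have hπAπ : ∀ i : ℕ, (π*A^i)*π = π*A^i := fun i => by
    rw [mul_assoc, ← cAjπ i, ← mul_assoc, hππ]
  have Lpow : ∀ i : ℕ, L^(i+1) = Matrix.fromBlocks (π*A^(i+1)) (A^i*π*B) 0 0 := by
    intro i
    induction i with
    | zero =>
      rw [pow_one, hLdef, pow_one, pow_zero, Matrix.one_mul]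
    | succ i ih =>
      rw [pow_succ, ih, hLdef, Matrix.fromBlocks_multiply]
      have t1 : (π*A^(i+1))*(π*A) = π*A^(i+1+1) := by
        rw [← mul_assoc, hπAπ (i+1), mul_assoc, ← pow_succ]
      have t2 : (π*A^(i+1))*(π*B) = A^(i+1)*π*B := by
        rw [← Matrix.mul_assoc, hπAπ (i+1), cAjπ (i+1)]
      simp [t1, t2]
  have Lnil : L^(ν+1) = 0 := by
    rw [Lpow ν]
    have e1 : π*A^(ν+1) = 0 := by rw [pow_succ, ← mul_assoc, hindA, zero_mul]
    have e2 : A^ν*π*B = 0 := by rw [← cAjπ ν, hindA, Matrix.zero_mul]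
    rw [e1, e2, Matrix.fromBlocks_zero]
  -- Drazin inverse of S = Q + K
  have hKQ2 : K^(1+1) = 0 := by rw [pow_two, hKK]
  have hSd := drz_add_right hQ1 hQ2 kQ hQ3 hKQ 1 hKQ2
  have hwS : (∑ j ∈ Finset.range (1+1), Qd^(j+1)*K^j) = Qd + Qd^2*K := by
    rw [Finset.sum_range_succ, Finset.sum_range_succ, Finset.sum_range_zero, zero_add]
    norm_num
  rw [hwS] at hSd
  obtain ⟨s1, s2, Ns, s3⟩ := hSd
  -- Drazin inverse of M1 = (Q + K) + L
  have hM1 := drz_add_left s1 s2 Ns s3 hSL ν Lnil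
  obtain ⟨m1, m2, Nm, m3⟩ := hM1
  -- M1 as a block matrix
  have hM1eq : (Q+K)+L = Matrix.fromBlocks A B C (C*Ad*B) := by
    rw [hQ, hKdef, hLdef, Matrix.fromBlocks_add, Matrix.fromBlocks_add]
    rw [Matrix.fromBlocks_inj]
    refine ⟨?_, ?_, ?_, ?_⟩
    · rw [add_zero, hπdef, sub_mul, one_mul, pfx1, pow_two]
      abel
    · rw [add_zero, hπdef, Matrix.sub_mul, Matrix.one_mul]
      abel
    · rw [add_zero, hπdef, Matrix.mul_sub, Matrix.mul_one, ← Matrix.mul_assoc]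
      abel
    · rw [add_zero, add_zero]
  -- orthogonality with M2
  have hZC' : ∀ (X : Matrix (Fin m) (Fin n) ℂ), Z*(C*X) = 0 := fun X => by
    rw [← Matrix.mul_assoc, hZC, Matrix.zero_mul]
  have hM1M2 : ((Q+K)+L)*M2 = 0 := by
    rw [hM1eq, hM2def, Matrix.fromBlocks_multiply]
    have e1 : (C*Ad*B)*Z = 0 := by
      rw [Matrix.mul_assoc (C*Ad) B Z, hBZ, Matrix.mul_zero]
    simp [hBZ, e1]
  have hM2M1 : M2*((Q+K)+L) = 0 := by
    rw [hM1eq, hM2def, Matrix.fromBlocks_multiply]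
    have e1 : Z*(C*Ad*B) = 0 := by
      rw [Matrix.mul_assoc C Ad B, hZC' (Ad*B)]
    simp [hZC, e1]
  -- Drazin inverse of M2
  have hDiag := drz_diag (ι := Fin m) Z Zd hZ1 hZ2 kZ hZ3
  obtain ⟨d1, d2, Nd, d3⟩ := hDiag
  rw [← hM2def] at d1 d2 d3
  -- combine
  have hOrth := drz_add_orth m1 m2 Nm m3 d1 d2 Nd d3 hM1M2 hM2M1
  obtain ⟨o1, o2, No, o3⟩ := hOrth
  -- identify M with (Q+K)+L+M2
  have hMeq : Matrix.fromBlocks A B C D = ((Q+K)+L) + M2 := by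
    rw [hM1eq, hM2def, Matrix.fromBlocks_add, Matrix.fromBlocks_inj]
    refine ⟨by rw [add_zero], by rw [add_zero], by rw [add_zero], ?_⟩
    rw [hZ]
    abel
  -- identify the claimed inverse with w₁ + diag(0,Zd)
  -- Sd powers
  have KQdp2 : K*(Qd^2*K) = 0 := by
    rw [← mul_assoc, pow_two, ← mul_assoc, KQd, zero_mul, zero_mul]
  have SdPow : ∀ r : ℕ, (Qd + Qd^2*K)^(r+1) = Qd^(r+1) + Qd^(r+2)*K := by
    intro r
    induction r with
    | zero => norm_num
    | succ r ih =>
      rw [pow_succ, ih, add_mul, mul_add, mul_add]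
      rw [mul_assoc (Qd^(r+2)) K Qd, KQd, mul_zero, zero_add]
      rw [mul_assoc (Qd^(r+2)) K (Qd^2*K), KQdp2, mul_zero, add_zero]
      rw [← pow_succ, ← mul_assoc, ← pow_add]
  -- killing the left column of Qd by π*A^(i+1)
  have killG : ∀ i : ℕ, (π*A^(i+1))*(AWd^2*A) = 0 := fun i => by
    rw [pow_two, ← Matrix.mul_assoc, ← Matrix.mul_assoc, πpowAWd, zero_mul, zero_mul]
  have killBlock : ∀ i : ℕ,
      (Matrix.fromBlocks (π*A^(i+1)) 0 0 0 : Matrix (Fin m ⊕ Fin n) (Fin m ⊕ Fin n) ℂ)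
        * Qd = 0 := by
    intro i
    rw [Qdb, Matrix.fromBlocks_multiply]
    have e1 : (π*A^(i+1))*((AWd^2*A)*(Ad*B)) = 0 := by
      rw [← Matrix.mul_assoc, killG, Matrix.zero_mul]
    simp [killG i, e1]
  have LQdE : ∀ i : ℕ, L^(i+1)*Qd =
      (Matrix.fromBlocks 0 (A^i*π*B) 0 0) * Qd := by
    intro i
    have hsplit : L^(i+1) = Matrix.fromBlocks 0 (A^i*π*B) 0 0
        + Matrix.fromBlocks (π*A^(i+1)) 0 0 0 := by
      rw [Lpow i, Matrix.fromBlocks_add]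
      simp
    rw [hsplit, add_mul, killBlock, add_zero]
  have LX : ∀ (i : ℕ) (X : Matrix (Fin m ⊕ Fin n) (Fin m ⊕ Fin n) ℂ),
      L^(i+1)*(Qd*X) = (Matrix.fromBlocks 0 (A^i*π*B) 0 0)*(Qd*X) := by
    intro i X
    rw [← mul_assoc, LQdE i, mul_assoc]
  have termEq : ∀ i : ℕ, L^(i+1)*(Qd + Qd^2*K)^(i+1+1)
      = (Matrix.fromBlocks 0 (A^i*π*B) 0 0)*(Qd^(i+2) + Qd^(i+3)*K) := by
    intro i
    have hfac : Qd^(i+1+1) + Qd^(i+1+2)*K = Qd*(Qd^(i+1) + Qd^(i+1+1)*K) := by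
      rw [mul_add, ← pow_succ', ← mul_assoc, ← pow_succ']
    rw [SdPow (i+1), hfac, LX i, ← hfac,
      show i+1+1 = i+2 from by omega, show i+1+2 = i+3 from by omega]
  have hw1eq : (∑ j ∈ Finset.range (ν+1), L^j*(Qd + Qd^2*K)^(j+1))
      = (Qd + Qd^2*K) + ∑ i ∈ Finset.range ν,
          (Matrix.fromBlocks 0 (A^i*π*B) 0 0)*(Qd^(i+2) + Qd^(i+3)*K) := by
    rw [Finset.sum_range_succ', pow_zero, one_mul, pow_one]
    rw [Finset.sum_congr rfl (fun i _ => termEq i)]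
    rw [add_comm]
  have hIcc : (∑ j ∈ Finset.Icc 1 ν,
        Matrix.fromBlocks 0 (A^(j-1)*π*B) 0 0 * (Qd^(j+1) + Qd^(j+2)*K))
      = ∑ i ∈ Finset.range ν,
          (Matrix.fromBlocks 0 (A^i*π*B) 0 0)*(Qd^(i+2) + Qd^(i+3)*K) := by
    rw [← Finset.Ico_add_one_right_eq_Icc, Finset.sum_Ico_eq_sum_range,
      show ν+1-1 = ν from by omega]
    refine Finset.sum_congr rfl fun i _ => ?_
    rw [show 1+i-1 = i from by omega, show 1+i+1 = i+2 from by omega,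
      show 1+i+2 = i+3 from by omega]
  have hXeq : Matrix.fromBlocks 0 0 0 Zd + Qd + Qd^2*K +
      (∑ j ∈ Finset.Icc 1 ν,
        Matrix.fromBlocks 0 (A^(j-1)*π*B) 0 0 * (Qd^(j+1) + Qd^(j+2)*K))
      = (∑ j ∈ Finset.range (ν+1), L^j*(Qd + Qd^2*K)^(j+1))
          + Matrix.fromBlocks 0 0 0 Zd := by
    rw [hIcc, hw1eq]
    abel
  rw [hMeq, hXeq]
  exact ⟨o1, o2, No, o3⟩
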